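/- (Key lemma for the complete-class theorem.) Let S be a valid predictive random set on (U, P_U), let {U_x : x ∈ X} be measurable subsets of U, and set η(x) = P_S(S ⊆ U_x). Then for any X₀ ⊆ X with ⋂_{x∈X₀} U_x measurable: inf_{x∈X₀} η(x) ≤ P_U(⋂_{x∈X₀} U_x). -/

import Mathlib

open MeasureTheory Set

/-- Lemma 0 (key lemma for the complete-class theorem): let `S` be a valid predictive
random set on `(U, μ)`, let `{U_x : x ∈ 𝒳}` be measurable subsets of `U`, and set
`η(x) = P(S ⊆ U_x)`. Then for any (nonempty) `X₀ ⊆ 𝒳` with `⋂_{x ∈ X₀} U_x` measurable,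
`inf_{x ∈ X₀} η(x) ≤ μ(⋂_{x ∈ X₀} U_x)`. -/
theorem complete_class_lemma {U 𝒳 Ω : Type*} [MeasurableSpace U] [MeasurableSpace Ω]
    (μ : Measure U) [IsProbabilityMeasure μ]
    (P : Measure Ω) [IsProbabilityMeasure P]
    (S : Ω → Set U)
    (hvalid : ∀ α ∈ Set.Ioo (0:ℝ) 1,
      μ {u | ENNReal.ofReal (1 - α) ≤ P {ω | u ∉ S ω}} ≤ ENNReal.ofReal α)
    (Ux : 𝒳 → Set U) (hmeas : ∀ x, MeasurableSet (Ux x))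
    (X₀ : Set 𝒳) (hX₀ : X₀.Nonempty) (hinter : MeasurableSet (⋂ x ∈ X₀, Ux x)) :
    ⨅ x ∈ X₀, P {ω | S ω ⊆ Ux x} ≤ μ (⋂ x ∈ X₀, Ux x) := by
  set A := ⋂ x ∈ X₀, Ux x with hA
  set η := ⨅ x ∈ X₀, P {ω | S ω ⊆ Ux x} with hη
  have hη1 : η ≤ 1 := by
    obtain ⟨x, hx⟩ := hX₀
    exact le_trans (biInf_le _ hx) prob_le_one
  have hsub : Aᶜ ⊆ {u | η ≤ P {ω | u ∉ S ω}} := by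
    intro u hu
    simp only [hA, mem_compl_iff, mem_iInter, not_forall] at hu
    obtain ⟨x, hx, hux⟩ := hu
    calc η ≤ P {ω | S ω ⊆ Ux x} := biInf_le _ hx
      _ ≤ P {ω | u ∉ S ω} := measure_mono (fun ω hω hc => hux (hω hc))
  have key : ∀ t : ℝ, 0 < t → ENNReal.ofReal t < η → ENNReal.ofReal t ≤ μ A := by
    intro t ht htη
    have ht1 : t < 1 := by
      by_contra h
      push_neg at h
      have : (1 : ENNReal) ≤ ENNReal.ofReal t := by
        simpa using ENNReal.one_le_ofReal.2 h
      exact absurd (lt_of_lt_of_le htη hη1) (not_lt.2 this)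
    have hα : (1 - t) ∈ Set.Ioo (0:ℝ) 1 := ⟨by linarith, by linarith⟩
    have h1 := hvalid (1 - t) hα
    have hcompl : μ Aᶜ ≤ ENNReal.ofReal (1 - t) := by
      refine le_trans (measure_mono ?_) h1
      intro u hu
      have hu' := hsub hu
      simp only [mem_setOf_eq] at hu' ⊢
      calc ENNReal.ofReal (1 - (1 - t)) = ENNReal.ofReal t := by ring_nf
        _ ≤ η := htη.le
        _ ≤ P {ω | u ∉ S ω} := hu'
    have hsum : μ A + μ Aᶜ = 1 := by rw [measure_add_measure_compl hinter, measure_univ]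
    have hineq : ENNReal.ofReal t + μ Aᶜ ≤ μ A + μ Aᶜ := by
      calc ENNReal.ofReal t + μ Aᶜ ≤ ENNReal.ofReal t + ENNReal.ofReal (1 - t) :=
            add_le_add_right hcompl _
        _ = ENNReal.ofReal (t + (1 - t)) := (ENNReal.ofReal_add ht.le (by linarith)).symm
        _ = 1 := by norm_num
        _ = μ A + μ Aᶜ := hsum.symm
    exact (ENNReal.add_le_add_iff_right (measure_ne_top μ Aᶜ)).mp hineq
  by_contra h
  push_neg at h
  obtain ⟨r, hr0, hr1, hr2⟩ := ENNReal.lt_iff_exists_real_btwn.mp h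
  have hrpos : 0 < r := by
    by_contra hc
    push_neg at hc
    have : ENNReal.ofReal r = 0 := ENNReal.ofReal_eq_zero.2 hc
    simp [this] at hr1
  exact absurd (key r hrpos hr2) (not_le.2 hr1)
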